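/- Let Q be a finite quiver without sources. Then the projective Leavitt complex P• of Q is an acyclic complex, i.e., Ker δ^{l+1} = Im δ^l for all integers l. -/

import Mathlib

noncomputable section

/-- A finite quiver: finite sets of vertices and arrows, with source and target maps. -/
structure FQ where
  V : Type
  E : Type
  [fV : Fintype V]
  [fE : Fintype E]
  [dV : DecidableEq V]
  [dE : DecidableEq E]
  s : E → V
  t : E → V

attribute [instance] FQ.fV FQ.fE FQ.dV FQ.dE

/-- `Q` has no sources: every vertex admits an arrow terminating at it. -/
def FQ.NoSources (Q : FQ) : Prop := ∀ i : Q.V, ∃ e : Q.E, Q.t e = i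

/-- The opposite quiver. -/
def FQ.op (Q : FQ) : FQ := { V := Q.V, E := Q.E, s := Q.t, t := Q.s }

/-- Paths in the quiver `Q` from a vertex to a vertex; `cons p e he` is the path
`e ∘ p` obtained by composing an arrow `e` after the path `p` (paths are written
from right to left). -/
inductive QP (Q : FQ) : Q.V → Q.V → Type
  | nil (i : Q.V) : QP Q i i
  | cons {i j : Q.V} (p : QP Q i j) (e : Q.E) (he : Q.s e = j) : QP Q i (Q.t e)

namespace QP

variable {Q : FQ}

/-- The length of a path. -/
def length : ∀ {i j : Q.V}, QP Q i j → ℕ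
  | _, _, .nil _ => 0
  | _, _, .cons p _ _ => length p + 1

/-- The first (rightmost) arrow of a path, if any. -/
def firstArrow : ∀ {i j : Q.V}, QP Q i j → Option Q.E
  | _, _, .nil _ => none
  | _, _, .cons p e _ => some ((firstArrow p).getD e)

/-- The last (leftmost) arrow of a path, if any. -/
def lastArrow : ∀ {i j : Q.V}, QP Q i j → Option Q.E
  | _, _, .nil _ => none
  | _, _, .cons _ e _ => some e

/-- Transport of a path along an equality of its starting vertices. -/
def castSrc {i i' j : Q.V} (h : i = i') (p : QP Q i j) : QP Q i' j := h ▸ p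

/-- Extend a path at its starting vertex by an arrow (`p ↦ p ∘ e`). -/
def preCons (e : Q.E) : ∀ {j : Q.V}, QP Q (Q.t e) j → QP Q (Q.s e) j
  | _, .nil _ => .cons (.nil (Q.s e)) e rfl
  | _, .cons p f hf => .cons (preCons e p) f hf

lemma length_castSrc {i i' j : Q.V} (h : i = i') (p : QP Q i j) :
    (castSrc h p).length = p.length := by subst h; rfl

lemma length_preCons (e : Q.E) : ∀ {j : Q.V} (p : QP Q (Q.t e) j),
    (preCons e p).length = p.length + 1
  | _, .nil _ => by simp [preCons, length]
  | _, .cons p f hf => by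
      show (QP.cons (preCons e p) f hf).length = _
      simp [length, length_preCons e p]

end QP

/-- With respect to a choice `asc` of an *associated* arrow terminating at each
non-source vertex, `IsAssoc Q asc a` says that the arrow `a` is the associated arrow
terminating at its target. -/
def IsAssoc (Q : FQ) (asc : ∀ i : Q.V, (∃ e, Q.t e = i) → Q.E) (a : Q.E) : Prop :=
  asc (Q.t a) ⟨a, rfl⟩ = a

/-- `(p, q)` is an *associated pair*: the paths `p` and `q` start at the same vertex,
and either one of them is trivial, or their first arrows differ, or their common first
arrow is not associated. -/
def AssocPair (Q : FQ) (asc : ∀ i : Q.V, (∃ e, Q.t e = i) → Q.E)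
    {i j j' : Q.V} (p : QP Q i j) (q : QP Q i j') : Prop :=
  ∀ a : Q.E, p.firstArrow = some a → q.firstArrow = some a → ¬ IsAssoc Q asc a

lemma assocPair_nil_left {Q : FQ} {asc : ∀ i : Q.V, (∃ e, Q.t e = i) → Q.E}
    {i j : Q.V} (q : QP Q i j) : AssocPair Q asc (QP.nil i) q := by
  intro a h
  simp [QP.firstArrow] at h

lemma assocPair_nil_right {Q : FQ} {asc : ∀ i : Q.V, (∃ e, Q.t e = i) → Q.E}
    {i j : Q.V} (p : QP Q i j) : AssocPair Q asc p (QP.nil i) := by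
  intro a _ h
  simp [QP.firstArrow] at h

/-- The index set `Λ^l_i` (for `i = x.i`): associated pairs `(p, q)` with
`t(p) = i` and `l(q) - l(p) = l`. -/
structure Lam (Q : FQ) (asc : ∀ i : Q.V, (∃ e, Q.t e = i) → Q.E) (l : ℤ) where
  a : Q.V              -- the common starting vertex of `p` and `q`
  i : Q.V              -- the terminating vertex of `p`
  b : Q.V              -- the terminating vertex of `q`
  p : QP Q a i
  q : QP Q a b
  ok : AssocPair Q asc p q
  deg : (q.length : ℤ) - (p.length : ℤ) = l

instance {Q : FQ} {asc : ∀ i : Q.V, (∃ e, Q.t e = i) → Q.E} {l : ℤ} :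
    DecidableEq (Lam Q asc l) := Classical.decEq _
/-- Generators of the path algebra `kQ`. -/
inductive AGen (Q : FQ)
  | vtx (i : Q.V)
  | ar (e : Q.E)

/-- The defining relations of the radical square zero algebra `A = kQ/J²`:
the trivial paths are orthogonal idempotents summing to the unit, arrows are unital
with respect to the trivial paths at their endpoints, and any product of two arrows
vanishes. -/
inductive ARel (k : Type) [Field k] (Q : FQ) :
    FreeAlgebra k (AGen Q) → FreeAlgebra k (AGen Q) → Prop
  | vtx_mul (i j : Q.V) :
      ARel k Q (FreeAlgebra.ι k (AGen.vtx i) * FreeAlgebra.ι k (AGen.vtx j))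
        (if i = j then FreeAlgebra.ι k (AGen.vtx i) else 0)
  | sum_vtx : ARel k Q (∑ i : Q.V, FreeAlgebra.ι k (AGen.vtx i)) 1
  | vtx_ar (e : Q.E) :
      ARel k Q (FreeAlgebra.ι k (AGen.vtx (Q.t e)) * FreeAlgebra.ι k (AGen.ar e))
        (FreeAlgebra.ι k (AGen.ar e))
  | ar_vtx (e : Q.E) :
      ARel k Q (FreeAlgebra.ι k (AGen.ar e) * FreeAlgebra.ι k (AGen.vtx (Q.s e)))
        (FreeAlgebra.ι k (AGen.ar e))
  | rad_sq (e f : Q.E) :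
      ARel k Q (FreeAlgebra.ι k (AGen.ar e) * FreeAlgebra.ι k (AGen.ar f)) 0

/-- The radical square zero algebra `A = kQ/J²` of the finite quiver `Q`. -/
abbrev AlgA (k : Type) [Field k] (Q : FQ) := RingQuot (ARel k Q)

/-- The image `e_i` in `A` of the trivial path at the vertex `i`. -/
def vtxA (k : Type) [Field k] (Q : FQ) (i : Q.V) : AlgA k Q :=
  RingQuot.mkAlgHom k (ARel k Q) (FreeAlgebra.ι k (AGen.vtx i))

/-- The image `α` in `A` of an arrow `α`. -/
def arA (k : Type) [Field k] (Q : FQ) (e : Q.E) : AlgA k Q :=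
  RingQuot.mkAlgHom k (ARel k Q) (FreeAlgebra.ι k (AGen.ar e))

lemma arA_mul_vtxA (k : Type) [Field k] (Q : FQ) (e : Q.E) :
    arA k Q e * vtxA k Q (Q.s e) = arA k Q e := by
  have h := RingQuot.mkAlgHom_rel k (ARel.ar_vtx (k := k) (Q := Q) e)
  simpa [vtxA, arA, map_mul] using h

/-- The indecomposable projective left `A`-module `P_i = A e_i`. -/
def Pmod (k : Type) [Field k] (Q : FQ) (i : Q.V) : Submodule (AlgA k Q) (AlgA k Q) :=
  Submodule.span (AlgA k Q) {vtxA k Q i}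

lemma vtxA_mem (k : Type) [Field k] (Q : FQ) (i : Q.V) : vtxA k Q i ∈ Pmod k Q i :=
  Submodule.mem_span_singleton_self _

lemma arA_mem (k : Type) [Field k] (Q : FQ) (e : Q.E) {i : Q.V} (he : Q.s e = i) :
    arA k Q e ∈ Pmod k Q i := by
  subst he
  rw [← arA_mul_vtxA k Q e]
  simpa [smul_eq_mul] using
    Submodule.smul_mem (Pmod k Q (Q.s e)) (arA k Q e) (vtxA_mem k Q (Q.s e))

/-- The `l`-th component `P^l = ⊕_{i ∈ Q₀} P_i^{(Λ^l_i)}` of the projective Leavitt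
complex. -/
abbrev PL (k : Type) [Field k] (Q : FQ) (asc : ∀ i : Q.V, (∃ e, Q.t e = i) → Q.E)
    (l : ℤ) : Type :=
  Π₀ x : Lam Q asc l, ↥(Pmod k Q x.i)

instance PL.instAddCommGroup (k : Type) [Field k] (Q : FQ)
    (asc : ∀ i : Q.V, (∃ e, Q.t e = i) → Q.E) (l : ℤ) :
    AddCommGroup (PL k Q asc l) :=
  @DFinsupp.addCommGroup (Lam Q asc l) (fun x => ↥(Pmod k Q x.i)) (fun _ => inferInstance)
/-- The basis element `e_i ζ_{(p,q)}` of `P^l`, for `x = (p, q) ∈ Λ^l_i`. -/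
def zE {k : Type} [Field k] {Q : FQ} {asc : ∀ i : Q.V, (∃ e, Q.t e = i) → Q.E}
    {l : ℤ} (x : Lam Q asc l) : PL k Q asc l :=
  DFinsupp.single x ⟨vtxA k Q x.i, vtxA_mem k Q x.i⟩

/-- The basis element `α ζ_{(p,q)}` of `P^l`, for `x = (p, q) ∈ Λ^l_i` and an arrow
`α` with `s(α) = i`. -/
def zA {k : Type} [Field k] {Q : FQ} {asc : ∀ i : Q.V, (∃ e, Q.t e = i) → Q.E}
    {l : ℤ} (x : Lam Q asc l) (e : Q.E) (he : Q.s e = x.i) : PL k Q asc l :=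
  DFinsupp.single x ⟨arA k Q e, arA_mem k Q e he⟩

/-- The family of `A`-linear maps `δ^l : P^l → P^{l+1}` is *the differential of the
projective Leavitt complex* when it satisfies the defining formulas:
`δ^l(α ζ_{(p,q)}) = 0`; `δ^l(e_i ζ_{(βp̂, q)}) = β ζ_{(p̂, q)}`; and
`δ^l(e_i ζ_{(e_i, q)}) = ∑_{β : t(β) = i} β ζ_{(e_{s(β)}, qβ)}`. -/
def IsLeavittDiff (k : Type) [Field k] (Q : FQ)
    (asc : ∀ i : Q.V, (∃ e, Q.t e = i) → Q.E)
    (δ : ∀ l : ℤ, PL k Q asc l →ₗ[AlgA k Q] PL k Q asc (l + 1)) : Prop :=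
  (∀ (l : ℤ) (x : Lam Q asc l) (e : Q.E) (he : Q.s e = x.i), δ l (zA x e he) = 0) ∧
  (∀ (l : ℤ) (a j b : Q.V) (p' : QP Q a j) (e : Q.E) (he : Q.s e = j) (q : QP Q a b)
      (ok : AssocPair Q asc (QP.cons p' e he) q)
      (dg : (q.length : ℤ) - ((QP.cons p' e he).length : ℤ) = l)
      (ok' : AssocPair Q asc p' q)
      (dg' : (q.length : ℤ) - (p'.length : ℤ) = l + 1),
      δ l (zE ⟨a, Q.t e, b, QP.cons p' e he, q, ok, dg⟩) =
        zA (⟨a, j, b, p', q, ok', dg'⟩ : Lam Q asc (l + 1)) e he) ∧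
  (∀ (l : ℤ) (a b : Q.V) (q : QP Q a b)
      (ok : AssocPair Q asc (QP.nil a) q)
      (dg : (q.length : ℤ) - ((QP.nil a).length : ℤ) = l),
      δ l (zE ⟨a, a, b, QP.nil a, q, ok, dg⟩) =
        ∑ e : {e : Q.E // Q.t e = a},
          zA (⟨Q.s e.1, Q.s e.1, b, QP.nil (Q.s e.1),
                QP.preCons e.1 (QP.castSrc e.2.symm q),
                assocPair_nil_left _,
                by
                  simp only [QP.length_preCons, QP.length_castSrc, QP.length] at *
                  push_cast
                  omega⟩ : Lam Q asc (l + 1)) e.1 rfl)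
namespace QP

variable {Q : FQ}

/-- The list of arrows of a path, first (rightmost) arrow at the head. -/
def toList : ∀ {i j : Q.V}, QP Q i j → List Q.E
  | _, _, .nil _ => []
  | _, _, .cons p e _ => toList p ++ [e]

lemma toList_inj : ∀ {a j j' : Q.V} (p : QP Q a j) (p' : QP Q a j'),
    toList p = toList p' → j = j' ∧ HEq p p'
  | _, _, _, .nil _, .nil _, _ => ⟨rfl, HEq.rfl⟩
  | _, _, _, .nil _, .cons p' e' _, h => by
      exfalso; simp [toList] at h
  | _, _, _, .cons p e _, .nil _, h => by
      exfalso; simp [toList] at h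
  | _, _, _, .cons p e he, .cons p' e' he', h => by
      simp only [toList] at h
      obtain ⟨h1, h2⟩ := List.append_inj' h rfl
      simp only [List.cons.injEq, and_true] at h2
      obtain ⟨hj, hp⟩ := toList_inj p p' h1
      subst hj
      subst h2
      cases eq_of_heq hp
      exact ⟨rfl, HEq.rfl⟩

lemma toList_eq_toList {a b : Q.V} {p p' : QP Q a b} (h : toList p = toList p') :
    p = p' := eq_of_heq (toList_inj p p' h).2

lemma castSrc_rfl {i j : Q.V} (p : QP Q i j) : castSrc rfl p = p := rfl

lemma toList_castSrc {i i' j : Q.V} (h : i = i') (p : QP Q i j) :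
    toList (castSrc h p) = toList p := by subst h; rfl

lemma toList_preCons (e : Q.E) : ∀ {j : Q.V} (p : QP Q (Q.t e) j),
    toList (preCons e p) = e :: toList p
  | _, .nil _ => by simp [preCons, toList]
  | _, .cons p f hf => by
      simp only [preCons, toList, toList_preCons e p]
      rfl

lemma firstArrow_preCons (e : Q.E) : ∀ {j : Q.V} (p : QP Q (Q.t e) j),
    firstArrow (preCons e p) = some e
  | _, .nil _ => by simp [preCons, firstArrow]
  | _, .cons p f hf => by
      simp only [preCons, firstArrow, firstArrow_preCons e p]
      rfl

lemma castSrc_cons {i i' j : Q.V} (h : i = i') (p : QP Q i j) (e : Q.E) (he : Q.s e = j) :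
    castSrc h (QP.cons p e he) = QP.cons (castSrc h p) e he := by subst h; rfl

lemma exists_preCons' (e : Q.E) :
    ∀ {b : Q.V} (q' : QP Q (Q.s e) b), q'.firstArrow = some e →
      ∃ q : QP Q (Q.t e) b, q' = preCons e q := by
  intro b q'
  induction q' with
  | nil => intro h; simp [firstArrow] at h
  | cons p f hf ih =>
      intro h
      cases p with
      | nil =>
          simp only [firstArrow, Option.getD_none, Option.some.injEq] at h
          subst h
          exact ⟨QP.nil _, rfl⟩
      | cons p2 g hg =>
          simp only [firstArrow, Option.getD_some, Option.some.injEq] at h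
          obtain ⟨q, hq⟩ := ih (by simp [firstArrow, h])
          refine ⟨QP.cons q f hf, ?_⟩
          show _ = QP.cons (preCons e q) f hf
          rw [← hq]

lemma exists_preCons {i : Q.V} (e : Q.E) (hi : Q.s e = i)
    {b : Q.V} (q' : QP Q i b) (h : q'.firstArrow = some e) :
    ∃ q : QP Q (Q.t e) b, q' = castSrc hi (preCons e q) := by
  subst hi
  simpa [castSrc_rfl] using exists_preCons' e q' h

end QP
/-- A concrete model of the radical-square-zero algebra: pairs of a vertex-function
and an arrow-function. -/
structure Bk (k : Type) [Field k] (Q : FQ) where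
  v : Q.V → k
  a : Q.E → k

namespace Bk

variable {k : Type} [Field k] {Q : FQ}

@[ext] lemma ext' {x y : Bk k Q} (hv : x.v = y.v) (ha : x.a = y.a) : x = y := by
  cases x; cases y; cases hv; cases ha; rfl

instance : Add (Bk k Q) := ⟨fun x y => ⟨x.v + y.v, x.a + y.a⟩⟩
instance : Zero (Bk k Q) := ⟨⟨0, 0⟩⟩
instance : Neg (Bk k Q) := ⟨fun x => ⟨-x.v, -x.a⟩⟩
instance : Mul (Bk k Q) :=
  ⟨fun x y => ⟨fun i => x.v i * y.v i,
    fun e => x.v (Q.t e) * y.a e + x.a e * y.v (Q.s e)⟩⟩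
instance : One (Bk k Q) := ⟨⟨1, 0⟩⟩

@[simp] lemma add_v (x y : Bk k Q) : (x + y).v = x.v + y.v := rfl
@[simp] lemma add_a (x y : Bk k Q) : (x + y).a = x.a + y.a := rfl
@[simp] lemma zero_v : (0 : Bk k Q).v = 0 := rfl
@[simp] lemma zero_a : (0 : Bk k Q).a = 0 := rfl
@[simp] lemma neg_v (x : Bk k Q) : (-x).v = -x.v := rfl
@[simp] lemma neg_a (x : Bk k Q) : (-x).a = -x.a := rfl
@[simp] lemma mul_v (x y : Bk k Q) (i : Q.V) : (x * y).v i = x.v i * y.v i := rfl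
@[simp] lemma mul_a (x y : Bk k Q) (e : Q.E) :
    (x * y).a e = x.v (Q.t e) * y.a e + x.a e * y.v (Q.s e) := rfl
@[simp] lemma one_v : (1 : Bk k Q).v = 1 := rfl
@[simp] lemma one_a : (1 : Bk k Q).a = 0 := rfl

instance : Ring (Bk k Q) where
  add_assoc x y z := by ext <;> simp [add_assoc]
  zero_add x := by ext <;> simp
  add_zero x := by ext <;> simp
  add_comm x y := by ext <;> simp [add_comm]
  neg_add_cancel x := by ext <;> simp
  mul_assoc x y z := by
    ext i
    · simp [mul_assoc]
    · simp; ring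
  one_mul x := by ext <;> simp
  mul_one x := by ext <;> simp
  left_distrib x y z := by ext <;> simp <;> ring
  right_distrib x y z := by ext <;> simp <;> ring
  zero_mul x := by ext <;> simp
  mul_zero x := by ext <;> simp
  nsmul := nsmulRec
  zsmul := zsmulRec

def algRH : k →+* Bk k Q where
  toFun c := ⟨fun _ => c, 0⟩
  map_one' := rfl
  map_mul' x y := by ext <;> simp
  map_zero' := rfl
  map_add' x y := by ext <;> simp

instance : Algebra k (Bk k Q) :=
  RingHom.toAlgebra' algRH (by
    intro c x
    ext <;> simp [algRH] <;> ring)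

@[simp] lemma algebraMap_v (c : k) (i : Q.V) : (algebraMap k (Bk k Q) c).v i = c := rfl
@[simp] lemma algebraMap_a (c : k) (e : Q.E) : (algebraMap k (Bk k Q) c).a e = 0 := rfl

@[simp] lemma smul_v (c : k) (x : Bk k Q) (i : Q.V) : (c • x).v i = c * x.v i := by
  rw [Algebra.smul_def]; simp
@[simp] lemma smul_a (c : k) (x : Bk k Q) (e : Q.E) : (c • x).a e = c * x.a e := by
  rw [Algebra.smul_def]; simp

/-- vertex basis element -/
def bV (i : Q.V) : Bk k Q := ⟨Pi.single i 1, 0⟩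
/-- arrow basis element -/
def bE (e : Q.E) : Bk k Q := ⟨0, Pi.single e 1⟩

@[simp] lemma bV_v (i j : Q.V) : (bV (k := k) (Q := Q) i).v j = if j = i then 1 else 0 := by
  simp [bV, Pi.single_apply]
@[simp] lemma bV_a (i : Q.V) (e : Q.E) : (bV (k := k) (Q := Q) i).a e = 0 := rfl
@[simp] lemma bE_v (e : Q.E) (j : Q.V) : (bE (k := k) (Q := Q) e).v j = 0 := rfl
@[simp] lemma bE_a (e f : Q.E) : (bE (k := k) (Q := Q) e).a f = if f = e then 1 else 0 := by
  simp [bE, Pi.single_apply]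

lemma bV_mul_bV (i j : Q.V) :
    (bV i : Bk k Q) * bV j = if i = j then bV i else 0 := by
  split_ifs with h
  · subst h; ext x <;> simp [Pi.single_apply]
  · ext x <;> simp
    by_cases hx : x = i <;> by_cases hy : x = j <;> simp [hx, hy] <;>
      first
        | exact h
        | exact fun hh => h hh.symm

/-- projection to the vertex component as additive hom -/
def vHom (i : Q.V) : Bk k Q →+ k where
  toFun x := x.v i
  map_zero' := rfl
  map_add' x y := rfl

/-- projection to the arrow component as additive hom -/
def aHom (e : Q.E) : Bk k Q →+ k where
  toFun x := x.a e
  map_zero' := rfl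
  map_add' x y := rfl

lemma sum_bV : ∑ i : Q.V, (bV i : Bk k Q) = 1 := by
  ext x
  · have : (∑ i : Q.V, (bV i : Bk k Q)).v x = ∑ i : Q.V, (bV i : Bk k Q).v x :=
      map_sum (vHom x) _ _
    rw [this]; simp
  · have : (∑ i : Q.V, (bV i : Bk k Q)).a x = ∑ i : Q.V, (bV i : Bk k Q).a x :=
      map_sum (aHom x) _ _
    rw [this]; simp

lemma bV_mul_bE (e : Q.E) : (bV (Q.t e) : Bk k Q) * bE e = bE e := by
  ext x
  · simp
  · simp only [mul_a, bV_v, bE_a, bV_a, bE_v, mul_zero, zero_mul, add_zero]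
    by_cases hx : x = e <;> simp [hx]

lemma bE_mul_bV (e : Q.E) : (bE e : Bk k Q) * bV (Q.s e) = bE e := by
  ext x
  · simp
  · simp only [mul_a, bE_v, bV_a, bE_a, bV_v, mul_zero, zero_mul, zero_add]
    by_cases hx : x = e <;> simp [hx]

lemma bE_mul_bE (e f : Q.E) : (bE e : Bk k Q) * bE f = 0 := by
  ext x <;> simp

end Bk
section AlgAStruct

variable (k : Type) [Field k] (Q : FQ)

/-- generator images in the model algebra -/
def genMap : AGen Q → Bk k Q
  | .vtx i => Bk.bV i
  | .ar e => Bk.bE e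

lemma F_rel : ∀ ⦃x y : FreeAlgebra k (AGen Q)⦄, ARel k Q x y →
    (FreeAlgebra.lift k (genMap k Q)) x = (FreeAlgebra.lift k (genMap k Q)) y := by
  intro x y h
  cases h with
  | vtx_mul i j =>
      by_cases hij : i = j <;>
        simp [map_mul, genMap, Bk.bV_mul_bV, hij]
  | sum_vtx =>
      simp [map_sum, genMap, Bk.sum_bV]
  | vtx_ar e =>
      simp [map_mul, genMap, Bk.bV_mul_bE]
  | ar_vtx e =>
      simp [map_mul, genMap, Bk.bE_mul_bV]
  | rad_sq e f =>
      simp [map_mul, genMap, Bk.bE_mul_bE]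

/-- The evaluation map from `A` to the model algebra. -/
def phiB : AlgA k Q →ₐ[k] Bk k Q :=
  RingQuot.liftAlgHom k ⟨FreeAlgebra.lift k (genMap k Q), F_rel k Q⟩

@[simp] lemma phiB_vtxA (i : Q.V) : phiB k Q (vtxA k Q i) = Bk.bV i := by
  rw [vtxA, phiB, RingQuot.liftAlgHom_mkAlgHom_apply]
  simp [genMap]

@[simp] lemma phiB_arA (e : Q.E) : phiB k Q (arA k Q e) = Bk.bE e := by
  rw [arA, phiB, RingQuot.liftAlgHom_mkAlgHom_apply]
  simp [genMap]

/-- coefficient of the trivial path `e_i`. -/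
def coeffV (i : Q.V) (m : AlgA k Q) : k := (phiB k Q m).v i
/-- coefficient of the arrow `e`. -/
def coeffA (e : Q.E) (m : AlgA k Q) : k := (phiB k Q m).a e

@[simp] lemma coeffV_zero (i : Q.V) : coeffV k Q i 0 = 0 := by simp [coeffV]
@[simp] lemma coeffA_zero (e : Q.E) : coeffA k Q e 0 = 0 := by simp [coeffA]

lemma coeffV_add (i : Q.V) (m n : AlgA k Q) :
    coeffV k Q i (m + n) = coeffV k Q i m + coeffV k Q i n := by simp [coeffV, map_add]
lemma coeffA_add (e : Q.E) (m n : AlgA k Q) :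
    coeffA k Q e (m + n) = coeffA k Q e m + coeffA k Q e n := by simp [coeffA, map_add]

lemma coeffV_algSmul (i : Q.V) (c : k) (m : AlgA k Q) :
    coeffV k Q i (algebraMap k (AlgA k Q) c • m) = c * coeffV k Q i m := by
  rw [algebraMap_smul, coeffV, coeffV, map_smul]
  simp
lemma coeffA_algSmul (e : Q.E) (c : k) (m : AlgA k Q) :
    coeffA k Q e (algebraMap k (AlgA k Q) c • m) = c * coeffA k Q e m := by
  rw [algebraMap_smul, coeffA, coeffA, map_smul]
  simp

@[simp] lemma coeffV_vtxA (i j : Q.V) :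
    coeffV k Q i (vtxA k Q j) = if i = j then 1 else 0 := by simp [coeffV]
@[simp] lemma coeffV_arA (i : Q.V) (e : Q.E) : coeffV k Q i (arA k Q e) = 0 := by
  simp [coeffV]
@[simp] lemma coeffA_vtxA (e : Q.E) (i : Q.V) : coeffA k Q e (vtxA k Q i) = 0 := by
  simp [coeffA]
@[simp] lemma coeffA_arA (e f : Q.E) :
    coeffA k Q e (arA k Q f) = if e = f then 1 else 0 := by simp [coeffA]

/- multiplication rules in `A` -/
lemma vtxA_mul_vtxA (i j : Q.V) :
    vtxA k Q i * vtxA k Q j = if i = j then vtxA k Q i else 0 := by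
  have h := RingQuot.mkAlgHom_rel k (ARel.vtx_mul (k := k) (Q := Q) i j)
  rw [map_mul] at h
  by_cases hij : i = j
  · subst hij; rw [if_pos rfl] at h; rw [if_pos rfl]; simpa [vtxA] using h
  · rw [if_neg hij] at h; rw [if_neg hij]; simpa [vtxA] using h

lemma one_eq_sum_vtxA : (1 : AlgA k Q) = ∑ i : Q.V, vtxA k Q i := by
  have h := RingQuot.mkAlgHom_rel k (ARel.sum_vtx (k := k) (Q := Q))
  simp only [map_sum, map_one] at h
  simpa [vtxA] using h.symm

lemma vtxA_mul_arA (i : Q.V) (e : Q.E) :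
    vtxA k Q i * arA k Q e = if i = Q.t e then arA k Q e else 0 := by
  have h := RingQuot.mkAlgHom_rel k (ARel.vtx_ar (k := k) (Q := Q) e)
  simp only [map_mul] at h
  split_ifs with hi
  · subst hi; simpa [vtxA, arA] using h
  · have : vtxA k Q i * arA k Q e = vtxA k Q i * (vtxA k Q (Q.t e) * arA k Q e) := by
      rw [show vtxA k Q (Q.t e) * arA k Q e = arA k Q e by simpa [vtxA, arA] using h]
    rw [this, ← mul_assoc, vtxA_mul_vtxA, if_neg hi, zero_mul]

lemma arA_mul_vtxA' (e : Q.E) (i : Q.V) :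
    arA k Q e * vtxA k Q i = if Q.s e = i then arA k Q e else 0 := by
  split_ifs with hi
  · subst hi; exact arA_mul_vtxA k Q e
  · have h1 : arA k Q e * vtxA k Q i = arA k Q e * (vtxA k Q (Q.s e) * vtxA k Q i) := by
      rw [← mul_assoc, arA_mul_vtxA]
    rw [h1, vtxA_mul_vtxA, if_neg hi, mul_zero]

lemma arA_mul_arA (e f : Q.E) : arA k Q e * arA k Q f = 0 := by
  have h := RingQuot.mkAlgHom_rel k (ARel.rad_sq (k := k) (Q := Q) e f)
  simp only [map_mul, map_zero] at h
  simpa [arA] using h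

end AlgAStruct
section Span

variable (k : Type) [Field k] (Q : FQ)

/-- generators of `A` as a `k`-vector space -/
def genSet : Set (AlgA k Q) := Set.range (vtxA k Q) ∪ Set.range (arA k Q)

lemma gen_mul_gen_mem {x y : AlgA k Q} (hx : x ∈ genSet k Q) (hy : y ∈ genSet k Q) :
    x * y ∈ Submodule.span k (genSet k Q) := by
  have hs : ∀ z ∈ genSet k Q, z ∈ Submodule.span k (genSet k Q) :=
    fun z hz => Submodule.subset_span hz
  rcases hx with ⟨i, rfl⟩ | ⟨e, rfl⟩ <;> rcases hy with ⟨j, rfl⟩ | ⟨f, rfl⟩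
  · rw [vtxA_mul_vtxA]
    split_ifs
    · exact hs _ (Or.inl ⟨i, rfl⟩)
    · exact Submodule.zero_mem _
  · rw [vtxA_mul_arA]
    split_ifs
    · exact hs _ (Or.inr ⟨f, rfl⟩)
    · exact Submodule.zero_mem _
  · rw [arA_mul_vtxA']
    split_ifs
    · exact hs _ (Or.inr ⟨e, rfl⟩)
    · exact Submodule.zero_mem _
  · rw [arA_mul_arA]; exact Submodule.zero_mem _

lemma mul_mem_span {x y : AlgA k Q} (hx : x ∈ Submodule.span k (genSet k Q))
    (hy : y ∈ Submodule.span k (genSet k Q)) :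
    x * y ∈ Submodule.span k (genSet k Q) := by
  induction hx using Submodule.span_induction with
  | mem a ha =>
      induction hy using Submodule.span_induction with
      | mem b hb => exact gen_mul_gen_mem k Q ha hb
      | zero => rw [mul_zero]; exact Submodule.zero_mem _
      | add b c _ _ ihb ihc => rw [mul_add]; exact Submodule.add_mem _ ihb ihc
      | smul c b _ ihb => rw [mul_smul_comm]; exact Submodule.smul_mem _ _ ihb
  | zero => rw [zero_mul]; exact Submodule.zero_mem _
  | add a b _ _ iha ihb => rw [add_mul]; exact Submodule.add_mem _ iha ihb
  | smul c a _ iha => rw [smul_mul_assoc]; exact Submodule.smul_mem _ _ iha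

lemma span_genSet_eq_top : Submodule.span k (genSet k Q) = ⊤ := by
  rw [Submodule.eq_top_iff']
  intro x
  obtain ⟨y, rfl⟩ := RingQuot.mkAlgHom_surjective k (ARel k Q) x
  induction y using FreeAlgebra.induction with
  | grade0 c =>
      rw [AlgHom.commutes]
      have h1 : (1 : AlgA k Q) ∈ Submodule.span k (genSet k Q) := by
        rw [one_eq_sum_vtxA]
        exact Submodule.sum_mem _ fun i _ => Submodule.subset_span (Or.inl ⟨i, rfl⟩)
      simpa [Algebra.algebraMap_eq_smul_one] using Submodule.smul_mem _ c h1
  | grade1 g =>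
      cases g with
      | vtx i => exact Submodule.subset_span (Or.inl ⟨i, rfl⟩)
      | ar e => exact Submodule.subset_span (Or.inr ⟨e, rfl⟩)
  | mul a b iha ihb => rw [map_mul]; exact mul_mem_span k Q iha ihb
  | add a b iha ihb => rw [map_add]; exact Submodule.add_mem _ iha ihb

/-- Decomposition of an element of `P_i = A e_i`. -/
lemma Pmod_repr {i : Q.V} (m : AlgA k Q) (hm : m ∈ Pmod k Q i) :
    ∃ (c : k) (μ : {e : Q.E // Q.s e = i} → k),
      m = c • vtxA k Q i + ∑ e : {e : Q.E // Q.s e = i}, μ e • arA k Q e.1 := by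
  rw [Pmod, Submodule.mem_span_singleton] at hm
  obtain ⟨a, rfl⟩ := hm
  have ha : a ∈ Submodule.span k (genSet k Q) := by rw [span_genSet_eq_top]; trivial
  rw [smul_eq_mul]
  induction ha using Submodule.span_induction with
  | mem x hx =>
      rcases hx with ⟨j, rfl⟩ | ⟨e, rfl⟩
      · rw [vtxA_mul_vtxA]
        by_cases hij : j = i
        · exact ⟨1, 0, by simp [hij]⟩
        · exact ⟨0, 0, by simp [hij]⟩
      · rw [arA_mul_vtxA']
        by_cases hei : Q.s e = i
        · refine ⟨0, Pi.single ⟨e, hei⟩ 1, ?_⟩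
          rw [if_pos hei]
          rw [Finset.sum_eq_single (⟨e, hei⟩ : {e : Q.E // Q.s e = i})]
          · simp
          · intro b _ hb
            rw [Pi.single_apply, if_neg hb, zero_smul]
          · intro h; exact absurd (Finset.mem_univ _) h
        · exact ⟨0, 0, by simp [hei]⟩
  | zero => exact ⟨0, 0, by simp⟩
  | add x y hx hy ihx ihy =>
      obtain ⟨c1, μ1, h1⟩ := ihx
      obtain ⟨c2, μ2, h2⟩ := ihy
      refine ⟨c1 + c2, μ1 + μ2, ?_⟩
      rw [add_mul, h1, h2, add_smul]
      rw [add_add_add_comm]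
      congr 1
      rw [← Finset.sum_add_distrib]
      exact Finset.sum_congr rfl fun e _ => by rw [Pi.add_apply, add_smul]
  | smul c x hx ihx =>
      obtain ⟨c1, μ1, h1⟩ := ihx
      refine ⟨c * c1, c • μ1, ?_⟩
      rw [smul_mul_assoc, h1, smul_add, smul_smul, Finset.smul_sum]
      congr 1
      exact Finset.sum_congr rfl fun e _ => by rw [Pi.smul_apply, smul_eq_mul, smul_smul]

end Span
section Machinery

variable {k : Type} [Field k] {Q : FQ}
variable {asc : ∀ i : Q.V, (∃ e, Q.t e = i) → Q.E}

lemma assocPair_of_cons {a j j' : Q.V} {p : QP Q a j} {e : Q.E} {he : Q.s e = j}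
    {q : QP Q a j'} (h : AssocPair Q asc (QP.cons p e he) q) : AssocPair Q asc p q := by
  intro b h1 h2
  exact h b (by simp [QP.firstArrow, h1]) h2

lemma asc_congr {i i' : Q.V} (hii : i = i') (h : ∃ e, Q.t e = i) (h' : ∃ e, Q.t e = i') :
    asc i h = asc i' h' := by subst hii; rfl

lemma isAssoc_asc (hasc : ∀ (i : Q.V) (h : ∃ e, Q.t e = i), Q.t (asc i h) = i)
    (i : Q.V) (h : ∃ e, Q.t e = i) : IsAssoc Q asc (asc i h) := by
  unfold IsAssoc
  exact asc_congr (hasc i h) _ h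

lemma eq_asc_of_isAssoc (hasc : ∀ (i : Q.V) (h : ∃ e, Q.t e = i), Q.t (asc i h) = i)
    {i : Q.V} {h : ∃ e, Q.t e = i} {b : Q.E} (hb : Q.t b = i) (hI : IsAssoc Q asc b) :
    b = asc i h := by
  unfold IsAssoc at hI
  rw [← hI]
  exact asc_congr hb _ h

lemma coeffV_sum {α : Type*} (s : Finset α) (f : α → AlgA k Q) (i : Q.V) :
    coeffV k Q i (∑ x ∈ s, f x) = ∑ x ∈ s, coeffV k Q i (f x) := by
  classical
  induction s using Finset.induction with
  | empty => simp
  | insert _ _ ha ih => rw [Finset.sum_insert ha, Finset.sum_insert ha, coeffV_add, ih]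

lemma coeffA_sum {α : Type*} (s : Finset α) (f : α → AlgA k Q) (e : Q.E) :
    coeffA k Q e (∑ x ∈ s, f x) = ∑ x ∈ s, coeffA k Q e (f x) := by
  classical
  induction s using Finset.induction with
  | empty => simp
  | insert _ _ ha ih => rw [Finset.sum_insert ha, Finset.sum_insert ha, coeffA_add, ih]

variable (δ : ∀ l : ℤ, PL k Q asc l →ₗ[AlgA k Q] PL k Q asc (l + 1))

/-- a single component as element of `P^l` -/
abbrev singlePL {lv : ℤ} (x : Lam Q asc lv) (mv : ↥(Pmod k Q x.i)) : PL k Q asc lv :=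
  DFinsupp.single x mv

/-- decomposition of a single component in terms of the generators `zE` and `zA` -/
lemma single_decomp (lv : ℤ) (x : Lam Q asc lv) (mv : ↥(Pmod k Q x.i)) :
    ∃ μ : {e : Q.E // Q.s e = x.i} → k,
      singlePL x mv =
        algebraMap k (AlgA k Q) (coeffV k Q x.i ↑mv) • zE (k := k) x +
          ∑ e : {e : Q.E // Q.s e = x.i},
            algebraMap k (AlgA k Q) (μ e) • zA (k := k) x e.1 e.2 := by
  obtain ⟨c, μ, hm⟩ := Pmod_repr k Q (↑mv) mv.2
  have hc : coeffV k Q x.i ↑mv = c := by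
    rw [hm, coeffV_add, coeffV_sum]
    rw [← algebraMap_smul (AlgA k Q) c (vtxA k Q x.i), coeffV_algSmul]
    simp only [coeffV_vtxA, if_pos rfl, mul_one]
    have : ∀ e : {e : Q.E // Q.s e = x.i}, coeffV k Q x.i (μ e • arA k Q e.1) = 0 := by
      intro e
      rw [← algebraMap_smul (AlgA k Q) (μ e) (arA k Q e.1), coeffV_algSmul, coeffV_arA,
        mul_zero]
    rw [Finset.sum_congr rfl fun e _ => this e]
    simp
  refine ⟨μ, ?_⟩
  have hmv : mv = algebraMap k (AlgA k Q) c • (⟨vtxA k Q x.i, vtxA_mem k Q x.i⟩ : ↥(Pmod k Q x.i)) +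
      ∑ e : {e : Q.E // Q.s e = x.i},
        algebraMap k (AlgA k Q) (μ e) • (⟨arA k Q e.1, arA_mem k Q e.1 e.2⟩ : ↥(Pmod k Q x.i)) := by
    apply Subtype.ext
    rw [Submodule.coe_add, Submodule.coe_smul, Submodule.coe_sum]
    rw [hm]
    congr 1
  rw [hc, hmv]
  unfold singlePL
  rw [DFinsupp.single_add, DFinsupp.single_smul]
  congr 1
  refine Eq.trans (map_sum (DFinsupp.singleAddHom (fun x' : Lam Q asc lv => ↥(Pmod k Q x'.i)) x)
    (fun e : {e : Q.E // Q.s e = x.i} =>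
      algebraMap k (AlgA k Q) (μ e) • (⟨arA k Q e.1, arA_mem k Q e.1 e.2⟩ : ↥(Pmod k Q x.i)))
    Finset.univ) ?_
  exact Finset.sum_congr rfl fun e _ => by
    rw [DFinsupp.singleAddHom_apply, DFinsupp.single_smul]; rfl

/-- the differential of a single component -/
lemma delta_single (hδ : IsLeavittDiff k Q asc δ) (lv : ℤ) (x : Lam Q asc lv) (mv : ↥(Pmod k Q x.i)) :
    δ lv (singlePL x mv) =
      algebraMap k (AlgA k Q) (coeffV k Q x.i ↑mv) • δ lv (zE (k := k) x) := by
  obtain ⟨μ, hdec⟩ := single_decomp lv x mv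
  rw [hdec, map_add, map_smul, map_sum]
  rw [Finset.sum_congr rfl fun (e : {e : Q.E // Q.s e = x.i}) _ => by
    rw [map_smul, hδ.1 lv x e.1 e.2, smul_zero]]
  simp

/-- the test functional for a row `(z, e₀)` -/
def PhiH (m : ℤ) (z : Lam Q asc m) (e₀ : Q.E) : PL k Q asc m →+ k where
  toFun w := coeffA k Q e₀ ↑(w z)
  map_zero' := by simp
  map_add' w w' := by
    show coeffA k Q e₀ ↑((w + w') z) = _
    rw [DFinsupp.add_apply, Submodule.coe_add, coeffA_add]

lemma PhiH_algSmul (m : ℤ) (z : Lam Q asc m) (e₀ : Q.E) (c : k) (w : PL k Q asc m) :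
    PhiH m z e₀ (algebraMap k (AlgA k Q) c • w) = c * PhiH m z e₀ w := by
  show coeffA k Q e₀ ↑((algebraMap k (AlgA k Q) c • w) z) = _
  rw [DFinsupp.smul_apply, Submodule.coe_smul, coeffA_algSmul]
  rfl

lemma PhiH_zA (m : ℤ) (z z' : Lam Q asc m) (e₀ e' : Q.E) (he' : Q.s e' = z'.i) :
    PhiH m z e₀ (zA z' e' he') =
      if z' = z then (if e₀ = e' then (1:k) else 0) else 0 := by
  show coeffA k Q e₀ ↑((DFinsupp.single z' _ : PL k Q asc m) z) = _
  by_cases h : z' = z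
  · subst h
    rw [DFinsupp.single_eq_same, if_pos rfl]
    exact coeffA_arA k Q e₀ e'
  · rw [DFinsupp.single_eq_of_ne (Ne.symm h), if_neg h]
    simp

end Machinery
section MemRange

variable {k : Type} [Field k] {Q : FQ}
variable {asc : ∀ i : Q.V, (∃ e, Q.t e = i) → Q.E}
variable (δ : ∀ l : ℤ, PL k Q asc l →ₗ[AlgA k Q] PL k Q asc (l + 1))

lemma mem_range_zA_assoc (hδ : IsLeavittDiff k Q asc δ) (l : ℤ) {a i b : Q.V}
    (p : QP Q a i) (e : Q.E) (he : Q.s e = i) (q : QP Q a b)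
    (hpair : AssocPair Q asc (QP.cons p e he) q)
    (ok : AssocPair Q asc p q) (dg : (q.length : ℤ) - (p.length : ℤ) = l + 1) :
    zA (⟨a, i, b, p, q, ok, dg⟩ : Lam Q asc (l + 1)) e he ∈ LinearMap.range (δ l) := by
  have dg2 : (q.length : ℤ) - (((QP.cons p e he).length : ℕ) : ℤ) = l := by
    simp only [QP.length]
    push_cast
    omega
  exact ⟨zE ⟨a, Q.t e, b, QP.cons p e he, q, hpair, dg2⟩,
    hδ.2.1 l a i b p e he q hpair dg2 ok dg⟩

lemma mem_range_zA' (hasc : ∀ (i : Q.V) (h : ∃ e, Q.t e = i), Q.t (asc i h) = i)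
    (hδ : IsLeavittDiff k Q asc δ) (l : ℤ) {a i b : Q.V}
    (p : QP Q a i) (q : QP Q a b) (ok : AssocPair Q asc p q)
    (dg : (q.length : ℤ) - (p.length : ℤ) = l + 1) (e : Q.E) (he : Q.s e = i) :
    zA (⟨a, i, b, p, q, ok, dg⟩ : Lam Q asc (l + 1)) e he ∈ LinearMap.range (δ l) := by
  by_cases hpair : AssocPair Q asc (QP.cons p e he) q
  · exact mem_range_zA_assoc δ hδ l p e he q hpair ok dg
  · unfold AssocPair at hpair
    push_neg at hpair
    obtain ⟨f, h1, h2, h3⟩ := hpair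
    cases p with
    | cons p2 g hg =>
        exfalso
        refine ok f ?_ h2 h3
        simpa [QP.firstArrow] using h1
    | nil =>
        simp only [QP.firstArrow, Option.getD_none, Option.some.injEq] at h1
        subst h1
        subst he
        obtain ⟨q₀, rfl⟩ := QP.exists_preCons e rfl q h2
        rw [QP.castSrc_rfl] at *
        have hlen : (QP.preCons e q₀).length = q₀.length + 1 := QP.length_preCons e q₀
        have dgq : ((q₀.length : ℕ) : ℤ) - (((QP.nil (Q.t e)).length : ℕ) : ℤ) = l := by
          simp only [QP.length]
          rw [hlen] at dg
          simp only [QP.length] at dg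
          push_cast at dg ⊢
          omega
        have key := hδ.2.2 l (Q.t e) b q₀ (assocPair_nil_left q₀) dgq
        have hsum : (∑ β : {β : Q.E // Q.t β = Q.t e},
            zA (⟨Q.s β.1, Q.s β.1, b, QP.nil (Q.s β.1),
                QP.preCons β.1 (QP.castSrc β.2.symm q₀),
                assocPair_nil_left _, by
                  have h99 := dgq
                  simp only [QP.length_preCons, QP.length_castSrc, QP.length] at h99 ⊢
                  push_cast at h99 ⊢
                  omega⟩ : Lam Q asc (l + 1)) β.1 rfl) ∈ LinearMap.range (δ l) :=
          ⟨_, key⟩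
        have hother : ∀ β : {β : Q.E // Q.t β = Q.t e}, β ≠ ⟨e, rfl⟩ →
            zA (⟨Q.s β.1, Q.s β.1, b, QP.nil (Q.s β.1),
                QP.preCons β.1 (QP.castSrc β.2.symm q₀),
                assocPair_nil_left _, by
                  have h99 := dgq
                  simp only [QP.length_preCons, QP.length_castSrc, QP.length] at h99 ⊢
                  push_cast at h99 ⊢
                  omega⟩ : Lam Q asc (l + 1)) β.1 rfl ∈ LinearMap.range (δ l) := by
          intro β hβ
          refine mem_range_zA_assoc δ hδ l _ β.1 rfl _ ?_ _ _
          intro c hc1 hc2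
          simp only [QP.firstArrow, Option.getD_none, Option.some.injEq] at hc1
          subst hc1
          intro hI
          apply hβ
          apply Subtype.ext
          exact ((eq_asc_of_isAssoc hasc (h := ⟨e, rfl⟩) β.2 hI).trans
            (eq_asc_of_isAssoc hasc (h := ⟨e, rfl⟩) rfl h3).symm)
        have hsplit := Finset.add_sum_erase (Finset.univ : Finset {β : Q.E // Q.t β = Q.t e})
          (fun β : {β : Q.E // Q.t β = Q.t e} =>
            zA (k := k) (⟨Q.s β.1, Q.s β.1, b, QP.nil (Q.s β.1),
                QP.preCons β.1 (QP.castSrc β.2.symm q₀),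
                assocPair_nil_left _, by
                  have h99 := dgq
                  simp only [QP.length_preCons, QP.length_castSrc, QP.length] at h99 ⊢
                  push_cast at h99 ⊢
                  omega⟩ : Lam Q asc (l + 1)) β.1 rfl)
          (Finset.mem_univ ⟨e, rfl⟩)
        have hmem : zA (⟨Q.s e, Q.s e, b, QP.nil (Q.s e),
            QP.preCons e (QP.castSrc (rfl : Q.t e = Q.t e).symm q₀),
            assocPair_nil_left _, by
                  have h99 := dgq
                  simp only [QP.length_preCons, QP.length_castSrc, QP.length] at h99 ⊢
                  push_cast at h99 ⊢
                  omega⟩ : Lam Q asc (l + 1)) e rfl ∈ LinearMap.range (δ l) := by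
          have := Submodule.sub_mem _ hsum (Submodule.sum_mem _
            (fun β (hβ : β ∈ Finset.univ.erase ⟨e, rfl⟩) =>
              hother β (Finset.ne_of_mem_erase hβ)))
          rw [← hsplit] at this
          simpa using this
        exact hmem

lemma mem_range_zA (hasc : ∀ (i : Q.V) (h : ∃ e, Q.t e = i), Q.t (asc i h) = i)
    (hδ : IsLeavittDiff k Q asc δ) (l : ℤ)
    (z : Lam Q asc (l + 1)) (e : Q.E) (he : Q.s e = z.i) :
    zA z e he ∈ LinearMap.range (δ l) := by
  obtain ⟨a, i, b, p, q, ok, dg⟩ := z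
  exact mem_range_zA' δ hasc hδ l p q ok dg e he

end MemRange
section Steps

variable {k : Type} [Field k] {Q : FQ}
variable {asc : ∀ i : Q.V, (∃ e, Q.t e = i) → Q.E}
variable (δ : ∀ l : ℤ, PL k Q asc l →ₗ[AlgA k Q] PL k Q asc (l + 1))

lemma stepA (hasc : ∀ (i : Q.V) (h : ∃ e, Q.t e = i), Q.t (asc i h) = i)
    (hδ : IsLeavittDiff k Q asc δ) (l : ℤ) {a₀ b₀ : Q.V}
    (q₀ : QP Q a₀ b₀) (ok₀ : AssocPair Q asc (QP.nil a₀) q₀)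
    (dg₀ : (q₀.length : ℤ) - (((QP.nil a₀).length : ℕ) : ℤ) = l + 1)
    (e₀ : Q.E) (he₀ : Q.t e₀ = a₀) (hIa : IsAssoc Q asc e₀)
    (dgz : (((QP.preCons e₀ (QP.castSrc he₀.symm q₀)).length : ℕ) : ℤ) -
      (((QP.nil (Q.s e₀)).length : ℕ) : ℤ) = (l + 1) + 1)
    (v : PL k Q asc (l + 1)) :
    PhiH ((l + 1) + 1) (⟨Q.s e₀, Q.s e₀, b₀, QP.nil (Q.s e₀),
        QP.preCons e₀ (QP.castSrc he₀.symm q₀), assocPair_nil_left _, dgz⟩ :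
          Lam Q asc ((l + 1) + 1)) e₀ (δ (l + 1) v) =
      coeffV k Q a₀ ↑(v ⟨a₀, a₀, b₀, QP.nil a₀, q₀, ok₀, dg₀⟩) := by
  have claim1 : PhiH ((l + 1) + 1) (⟨Q.s e₀, Q.s e₀, b₀, QP.nil (Q.s e₀),
        QP.preCons e₀ (QP.castSrc he₀.symm q₀), assocPair_nil_left _, dgz⟩ :
          Lam Q asc ((l + 1) + 1)) e₀
      (δ (l + 1) (zE (⟨a₀, a₀, b₀, QP.nil a₀, q₀, ok₀, dg₀⟩ : Lam Q asc (l + 1)))) = 1 := by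
    rw [hδ.2.2 (l + 1) a₀ b₀ q₀ ok₀ dg₀, map_sum]
    rw [Finset.sum_eq_single (⟨e₀, he₀⟩ : {e : Q.E // Q.t e = a₀})]
    · rw [PhiH_zA, if_pos rfl, if_pos rfl]
    · intro β _ hβ
      rw [PhiH_zA]
      have hne : ¬ (e₀ = β.1) := fun h => hβ (Subtype.ext h.symm)
      rw [if_neg hne, ite_self]
    · intro h; exact absurd (Finset.mem_univ _) h
  have claim0 : ∀ x : Lam Q asc (l + 1),
      x ≠ (⟨a₀, a₀, b₀, QP.nil a₀, q₀, ok₀, dg₀⟩ : Lam Q asc (l + 1)) →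
      PhiH ((l + 1) + 1) (⟨Q.s e₀, Q.s e₀, b₀, QP.nil (Q.s e₀),
        QP.preCons e₀ (QP.castSrc he₀.symm q₀), assocPair_nil_left _, dgz⟩ :
          Lam Q asc ((l + 1) + 1)) e₀ (δ (l + 1) (zE x)) = 0 := by
    rintro ⟨a, i, b, p, q, ok, dg⟩ hx
    cases p with
    | cons p' f hf =>
        have ok' : AssocPair Q asc p' q := assocPair_of_cons ok
        have dg' : (q.length : ℤ) - (p'.length : ℤ) = (l + 1) + 1 := by
          simp only [QP.length] at dg
          push_cast at dg ⊢
          omega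
        rw [hδ.2.1 (l + 1) a _ b p' f hf q ok dg ok' dg']
        rw [PhiH_zA]
        split_ifs with h1 h2
        · exfalso
          subst h2
          rw [Lam.mk.injEq] at h1
          obtain ⟨ha, hj, hb, hp, hq⟩ := h1
          subst ha
          subst hj
          subst hb
          obtain rfl := eq_of_heq hp
          obtain rfl := eq_of_heq hq
          exact ok e₀ (by simp [QP.firstArrow]) (QP.firstArrow_preCons _ _) hIa
        · rfl
        · rfl
    | nil =>
        rw [hδ.2.2 (l + 1) a b q ok dg, map_sum]
        apply Finset.sum_eq_zero
        rintro ⟨β, hβ⟩ _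
        rw [PhiH_zA]
        split_ifs with h1 h2
        · exfalso
          subst h2
          have haa : a = a₀ := hβ.symm.trans he₀
          subst haa
          rw [Lam.mk.injEq] at h1
          obtain ⟨h1a, h1i, h1b, h1p, h1q⟩ := h1
          subst h1b
          have hqq : q = q₀ := by
            apply QP.toList_eq_toList
            have := congrArg QP.toList (eq_of_heq h1q)
            simpa [QP.toList_preCons, QP.toList_castSrc] using this
          subst hqq
          exact hx rfl
        · rfl
        · rfl
  induction v using DFinsupp.induction with
  | h0 =>
      rw [map_zero, map_zero, DFinsupp.zero_apply, ZeroMemClass.coe_zero, coeffV_zero]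
  | ha x mv f hf1 hf2 ih =>
      rw [map_add, map_add, delta_single δ hδ (l + 1) x mv, PhiH_algSmul, ih,
        DFinsupp.add_apply, Submodule.coe_add, coeffV_add]
      by_cases hx : x = (⟨a₀, a₀, b₀, QP.nil a₀, q₀, ok₀, dg₀⟩ : Lam Q asc (l + 1))
      · subst hx
        rw [claim1, mul_one, DFinsupp.single_eq_same]
      · rw [claim0 x hx, mul_zero, zero_add, DFinsupp.single_eq_of_ne (Ne.symm hx),
          ZeroMemClass.coe_zero, coeffV_zero, zero_add]

lemma stepB (hasc : ∀ (i : Q.V) (h : ∃ e, Q.t e = i), Q.t (asc i h) = i)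
    (hδ : IsLeavittDiff k Q asc δ) (l : ℤ) {a₀ j₀ b₀ : Q.V}
    (p₀ : QP Q a₀ j₀) (e₀ : Q.E) (h₀ : Q.s e₀ = j₀)
    (q₀ : QP Q a₀ b₀) (ok₀ : AssocPair Q asc (QP.cons p₀ e₀ h₀) q₀)
    (dg₀ : (q₀.length : ℤ) - (((QP.cons p₀ e₀ h₀).length : ℕ) : ℤ) = l + 1)
    (okz : AssocPair Q asc p₀ q₀)
    (dgz : (q₀.length : ℤ) - ((p₀.length : ℕ) : ℤ) = (l + 1) + 1)
    (v : PL k Q asc (l + 1))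
    (hvt : ∀ (a b : Q.V) (q : QP Q a b) (ok : AssocPair Q asc (QP.nil a) q)
      (dg : (q.length : ℤ) - (((QP.nil a).length : ℕ) : ℤ) = l + 1),
      coeffV k Q a ↑(v (⟨a, a, b, QP.nil a, q, ok, dg⟩ : Lam Q asc (l + 1))) = 0) :
    PhiH ((l + 1) + 1) (⟨a₀, j₀, b₀, p₀, q₀, okz, dgz⟩ : Lam Q asc ((l + 1) + 1)) e₀
      (δ (l + 1) v)
      = coeffV k Q (Q.t e₀) ↑(v ⟨a₀, Q.t e₀, b₀, QP.cons p₀ e₀ h₀, q₀, ok₀, dg₀⟩) := by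
  have claim1 : PhiH ((l + 1) + 1) (⟨a₀, j₀, b₀, p₀, q₀, okz, dgz⟩ :
        Lam Q asc ((l + 1) + 1)) e₀
      (δ (l + 1) (zE (⟨a₀, Q.t e₀, b₀, QP.cons p₀ e₀ h₀, q₀, ok₀, dg₀⟩ :
        Lam Q asc (l + 1)))) = 1 := by
    rw [hδ.2.1 (l + 1) a₀ j₀ b₀ p₀ e₀ h₀ q₀ ok₀ dg₀ okz dgz]
    rw [PhiH_zA, if_pos rfl, if_pos rfl]
  have claim0 : ∀ (a j b : Q.V) (p' : QP Q a j) (f : Q.E) (hf : Q.s f = j)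
      (q : QP Q a b) (ok : AssocPair Q asc (QP.cons p' f hf) q)
      (dg : (q.length : ℤ) - (((QP.cons p' f hf).length : ℕ) : ℤ) = l + 1),
      (⟨a, Q.t f, b, QP.cons p' f hf, q, ok, dg⟩ : Lam Q asc (l + 1)) ≠
        (⟨a₀, Q.t e₀, b₀, QP.cons p₀ e₀ h₀, q₀, ok₀, dg₀⟩ : Lam Q asc (l + 1)) →
      PhiH ((l + 1) + 1) (⟨a₀, j₀, b₀, p₀, q₀, okz, dgz⟩ : Lam Q asc ((l + 1) + 1)) e₀
        (δ (l + 1) (zE ⟨a, Q.t f, b, QP.cons p' f hf, q, ok, dg⟩)) = 0 := by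
    intro a j b p' f hf q ok dg hne
    have ok' : AssocPair Q asc p' q := assocPair_of_cons ok
    have dg' : (q.length : ℤ) - (p'.length : ℤ) = (l + 1) + 1 := by
      simp only [QP.length] at dg
      push_cast at dg ⊢
      omega
    rw [hδ.2.1 (l + 1) a j b p' f hf q ok dg ok' dg']
    rw [PhiH_zA]
    split_ifs with h1 h2
    · exfalso
      subst h2
      rw [Lam.mk.injEq] at h1
      obtain ⟨ha, hj, hb, hp, hq⟩ := h1
      subst ha
      subst hj
      subst hb
      obtain rfl := eq_of_heq hp
      obtain rfl := eq_of_heq hq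
      exact hne rfl
    · rfl
    · rfl
  revert hvt
  induction v using DFinsupp.induction with
  | h0 =>
      intro _
      rw [map_zero, map_zero, DFinsupp.zero_apply, ZeroMemClass.coe_zero, coeffV_zero]
  | ha x mv f hf1 hf2 ih =>
      intro hvt
      have hvtf : ∀ (a b : Q.V) (q : QP Q a b) (ok : AssocPair Q asc (QP.nil a) q)
          (dg : (q.length : ℤ) - (((QP.nil a).length : ℕ) : ℤ) = l + 1),
          coeffV k Q a ↑(f (⟨a, a, b, QP.nil a, q, ok, dg⟩ : Lam Q asc (l + 1))) = 0 := by
        intro a b q ok dg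
        by_cases hxy : x = (⟨a, a, b, QP.nil a, q, ok, dg⟩ : Lam Q asc (l + 1))
        · rw [← hxy, hf1, ZeroMemClass.coe_zero, coeffV_zero]
        · have := hvt a b q ok dg
          rw [DFinsupp.add_apply, DFinsupp.single_eq_of_ne (Ne.symm hxy), zero_add] at this
          exact this
      rw [map_add, map_add, delta_single δ hδ (l + 1) x mv, PhiH_algSmul, ih hvtf,
        DFinsupp.add_apply, Submodule.coe_add, coeffV_add]
      by_cases hx : x = (⟨a₀, Q.t e₀, b₀, QP.cons p₀ e₀ h₀, q₀, ok₀, dg₀⟩ : Lam Q asc (l + 1))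
      · subst hx
        rw [claim1, mul_one, DFinsupp.single_eq_same]
      · rw [DFinsupp.single_eq_of_ne (Ne.symm hx), ZeroMemClass.coe_zero, coeffV_zero, zero_add]
        suffices h : coeffV k Q x.i ↑mv *
            PhiH ((l + 1) + 1) (⟨a₀, j₀, b₀, p₀, q₀, okz, dgz⟩ : Lam Q asc ((l + 1) + 1)) e₀
              (δ (l + 1) (zE x)) = 0 by
          rw [h, zero_add]
        obtain ⟨a, i, b, p, q, ok, dg⟩ := x
        cases p with
        | nil =>
            have hcv : coeffV k Q a ↑mv = 0 := by
              have := hvt a b q ok dg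
              rw [DFinsupp.add_apply, DFinsupp.single_eq_same, hf1, add_zero] at this
              exact this
            rw [show coeffV k Q (⟨a, a, b, QP.nil a, q, ok, dg⟩ :
              Lam Q asc (l + 1)).i ↑mv = coeffV k Q a ↑mv from rfl, hcv, zero_mul]
        | cons p' g hg =>
            rw [claim0 a _ b p' g hg q ok dg hx, mul_zero]

end Steps
section Final

variable {k : Type} [Field k] {Q : FQ}
variable {asc : ∀ i : Q.V, (∃ e, Q.t e = i) → Q.E}
variable (δ : ∀ l : ℤ, PL k Q asc l →ₗ[AlgA k Q] PL k Q asc (l + 1))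

lemma ddzE (hδ : IsLeavittDiff k Q asc δ) (lv : ℤ) (x : Lam Q asc lv) :
    δ (lv + 1) (δ lv (zE x)) = 0 := by
  obtain ⟨a, i, b, p, q, ok, dg⟩ := x
  cases p with
  | cons p' f hf =>
      have ok' : AssocPair Q asc p' q := assocPair_of_cons ok
      have dg' : (q.length : ℤ) - (p'.length : ℤ) = lv + 1 := by
        simp only [QP.length] at dg
        push_cast at dg ⊢
        omega
      rw [hδ.2.1 lv a _ b p' f hf q ok dg ok' dg']
      exact hδ.1 (lv + 1) _ f hf
  | nil =>
      rw [hδ.2.2 lv a b q ok dg, map_sum]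
      rw [Finset.sum_congr rfl fun (β : {e : Q.E // Q.t e = a}) _ =>
        hδ.1 (lv + 1) _ β.1 rfl]
      simp

lemma dd_zero (hδ : IsLeavittDiff k Q asc δ) (lv : ℤ) (u : PL k Q asc lv) :
    δ (lv + 1) (δ lv u) = 0 := by
  induction u using DFinsupp.induction with
  | h0 => rw [map_zero, map_zero]
  | ha x mv f hf1 hf2 ih =>
      rw [map_add, map_add, delta_single δ hδ lv x mv, map_smul, ddzE δ hδ lv x,
        smul_zero, ih, add_zero]

end Final

/-- **Acyclicity of the projective Leavitt complex (Proposition 2.7).**  Let `Q` be a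
finite quiver without sources and `δ` the differential of the projective Leavitt
complex `P•` of `Q`.  Then `P•` is acyclic: `Im δ^l = Ker δ^{l+1}` for every `l ∈ ℤ`. -/
theorem projective_leavitt_complex_acyclic (k : Type) [Field k]
    (Q : FQ) (hQ : Q.NoSources)
    (asc : ∀ i : Q.V, (∃ e, Q.t e = i) → Q.E)
    (hasc : ∀ (i : Q.V) (h : ∃ e, Q.t e = i), Q.t (asc i h) = i)
    (δ : ∀ l : ℤ, PL k Q asc l →ₗ[AlgA k Q] PL k Q asc (l + 1))
    (hδ : IsLeavittDiff k Q asc δ) :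
    ∀ l : ℤ, LinearMap.range (δ l) = LinearMap.ker (δ (l + 1)) := by
  intro l
  apply le_antisymm
  · intro w hw
    obtain ⟨u, rfl⟩ := hw
    rw [LinearMap.mem_ker]
    exact dd_zero δ hδ l u
  · intro v hv
    rw [LinearMap.mem_ker] at hv
    have hTriv : ∀ (a b : Q.V) (q : QP Q a b) (ok : AssocPair Q asc (QP.nil a) q)
        (dg : (q.length : ℤ) - (((QP.nil a).length : ℕ) : ℤ) = l + 1),
        coeffV k Q a ↑(v (⟨a, a, b, QP.nil a, q, ok, dg⟩ : Lam Q asc (l + 1))) = 0 := by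
      intro a b q ok dg
      have he₀ : Q.t (asc a (hQ a)) = a := hasc a (hQ a)
      have hIa : IsAssoc Q asc (asc a (hQ a)) := isAssoc_asc hasc a (hQ a)
      have dgz : (((QP.preCons (asc a (hQ a)) (QP.castSrc he₀.symm q)).length : ℕ) : ℤ) -
          (((QP.nil (Q.s (asc a (hQ a)))).length : ℕ) : ℤ) = (l + 1) + 1 := by
        simp only [QP.length_preCons, QP.length_castSrc, QP.length] at dg ⊢
        push_cast at dg ⊢
        omega
      have hA := stepA δ hasc hδ l q ok dg (asc a (hQ a)) he₀ hIa dgz v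
      rw [hv, map_zero] at hA
      exact hA.symm
    have hAll : ∀ x : Lam Q asc (l + 1), coeffV k Q x.i ↑(v x) = 0 := by
      rintro ⟨a, i, b, p, q, ok, dg⟩
      cases p with
      | nil => exact hTriv a b q ok dg
      | cons p₀ e₀ h₀ =>
          have okz : AssocPair Q asc p₀ q := assocPair_of_cons ok
          have dgz : (q.length : ℤ) - ((p₀.length : ℕ) : ℤ) = (l + 1) + 1 := by
            simp only [QP.length] at dg
            push_cast at dg ⊢
            omega
          have hB := stepB δ hasc hδ l p₀ e₀ h₀ q ok dg okz dgz v hTriv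
          rw [hv, map_zero] at hB
          exact hB.symm
    have key : ∀ w : PL k Q asc (l + 1),
        (∀ x : Lam Q asc (l + 1), coeffV k Q x.i ↑(w x) = 0) →
        w ∈ LinearMap.range (δ l) := by
      intro w
      induction w using DFinsupp.induction with
      | h0 => intro _; exact zero_mem _
      | ha x mv f hf1 hf2 ih =>
          intro hco
          apply Submodule.add_mem
          · obtain ⟨μ, hdec⟩ := single_decomp (lv := l + 1) x mv
            have hc0 : coeffV k Q x.i ↑mv = 0 := by
              have := hco x
              rwa [DFinsupp.add_apply, DFinsupp.single_eq_same, hf1, add_zero] at this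
            rw [show (DFinsupp.single x mv : PL k Q asc (l + 1)) = _ from hdec, hc0,
              map_zero, zero_smul, zero_add]
            exact Submodule.sum_mem _ fun e _ =>
              Submodule.smul_mem _ _ (mem_range_zA δ hasc hδ l x e.1 e.2)
          · apply ih
            intro y
            by_cases hxy : x = y
            · rw [← hxy, hf1, ZeroMemClass.coe_zero, coeffV_zero]
            · have := hco y
              rwa [DFinsupp.add_apply, DFinsupp.single_eq_of_ne (Ne.symm hxy), zero_add] at this
    exact key v hAll
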